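/- Let N = 2, 2 < p < q < ∞, S ≤ 0. Then the extreme value μ̂^S := inf over u ∈ Σ\{0} of μ^S(u) = ((T(u)-2S)^{1/2}L(u)^{1/2} + (1/q)B(u)) / ((1/p)A(u)) is strictly positive. -/

import Mathlib

open MeasureTheory

/-- Membership in `Σ = H¹(ℝ²) ∩ F(H¹)` (with the relevant integrabilities). -/
def InSigma (p q : ℝ) (u : EuclideanSpace ℝ (Fin 2) → ℂ) : Prop :=
  Differentiable ℝ u ∧
  MemLp u 2 (volume : Measure (EuclideanSpace ℝ (Fin 2))) ∧
  Integrable (fun x : EuclideanSpace ℝ (Fin 2) => ‖fderiv ℝ u x‖ ^ 2) ∧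
  Integrable (fun x : EuclideanSpace ℝ (Fin 2) => ‖x‖ ^ 2 * ‖u x‖ ^ 2) ∧
  Integrable (fun x : EuclideanSpace ℝ (Fin 2) => ‖u x‖ ^ p) ∧
  Integrable (fun x : EuclideanSpace ℝ (Fin 2) => ‖u x‖ ^ q)

noncomputable def Tfun (u : EuclideanSpace ℝ (Fin 2) → ℂ) : ℝ :=
  ∫ x : EuclideanSpace ℝ (Fin 2), ‖fderiv ℝ u x‖ ^ 2

noncomputable def Lfun (u : EuclideanSpace ℝ (Fin 2) → ℂ) : ℝ :=
  ∫ x : EuclideanSpace ℝ (Fin 2), ‖x‖ ^ 2 * ‖u x‖ ^ 2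

noncomputable def Afun (p : ℝ) (u : EuclideanSpace ℝ (Fin 2) → ℂ) : ℝ :=
  ∫ x : EuclideanSpace ℝ (Fin 2), ‖u x‖ ^ p

noncomputable def Bfun (q : ℝ) (u : EuclideanSpace ℝ (Fin 2) → ℂ) : ℝ :=
  ∫ x : EuclideanSpace ℝ (Fin 2), ‖u x‖ ^ q

/-- The nonlinear Rayleigh quotient `μ^S(u)`. -/
noncomputable def muS (p q S : ℝ) (u : EuclideanSpace ℝ (Fin 2) → ℂ) : ℝ :=
  (Real.sqrt (Tfun u - 2 * S) * Real.sqrt (Lfun u) + (1 / q) * Bfun q u)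
    / ((1 / p) * Afun p u)

section Aux
open Filter intervalIntegral

lemma oneD_tendsto (g g' : ℝ → ℝ) (hd : ∀ t, HasDerivAt g (g' t) t)
    (hg0 : ∀ t, 0 ≤ g t) (hgi : Integrable g)
    (hhi : Integrable (fun t => g t + t * g' t)) :
    Tendsto (fun t => t * g t) atTop (nhds 0) := by
  set h : ℝ → ℝ := fun t => t * g t with hh_def
  have hh : ∀ t, HasDerivAt h (g t + t * g' t) t := by
    intro t
    exact ((hasDerivAt_id' t).mul (hd t)).congr_deriv (by ring)
  have hftc : ∀ t : ℝ, ∫ s in (0:ℝ)..t, (g s + s * g' s) = h t - h 0 := by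
    intro t
    exact integral_eq_sub_of_hasDerivAt (fun s _ => hh s) (hhi.intervalIntegrable)
  set ℓ : ℝ := h 0 + ∫ s in Set.Ioi (0:ℝ), (g s + s * g' s) with hℓ
  have htend : Tendsto h atTop (nhds ℓ) := by
    have h1 := intervalIntegral_tendsto_integral_Ioi 0 hhi.integrableOn tendsto_id
    have h2 : Tendsto (fun t => h 0 + ∫ s in (0:ℝ)..t, (g s + s * g' s)) atTop (nhds ℓ) :=
      tendsto_const_nhds.add h1
    refine h2.congr fun t => ?_
    rw [hftc]; ring
  have hℓ0 : ℓ = 0 := by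
    by_contra hne
    have hℓnn : 0 ≤ ℓ := by
      refine ge_of_tendsto htend ?_
      filter_upwards [eventually_ge_atTop (0:ℝ)] with t ht
      exact mul_nonneg ht (hg0 t)
    have hℓpos : 0 < ℓ := lt_of_le_of_ne hℓnn (Ne.symm hne)
    have hev : ∀ᶠ t in atTop, ℓ / 2 ≤ h t :=
      htend.eventually_const_le (by linarith)
    obtain ⟨T₀, hT₀⟩ := hev.exists_forall_of_atTop
    set T : ℝ := max T₀ 1 with hTdef
    have hTpos : (0:ℝ) < T := lt_of_lt_of_le one_pos (le_max_right _ _)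
    have hbound : ∀ t ∈ Set.Ioi T, ℓ / 2 * t⁻¹ ≤ g t := by
      intro t ht
      have ht' : ℓ / 2 ≤ t * g t := hT₀ t ((le_max_left _ _).trans (le_of_lt ht))
      have htpos : 0 < t := hTpos.trans ht
      have := mul_le_mul_of_nonneg_right ht' (le_of_lt (inv_pos.mpr htpos))
      calc ℓ / 2 * t⁻¹ ≤ (t * g t) * t⁻¹ := this
        _ = g t := by field_simp
    have hIOn : IntegrableOn (fun t => ℓ / 2 * t⁻¹) (Set.Ioi T) := by
      refine Integrable.mono hgi.integrableOn ?_ ?_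
      · exact (measurable_const.mul measurable_inv).aestronglyMeasurable
      · filter_upwards [ae_restrict_mem measurableSet_Ioi] with t ht
        have h1 := hbound t ht
        have htpos : 0 < t := hTpos.trans ht
        rw [Real.norm_eq_abs, Real.norm_eq_abs, abs_of_nonneg (by positivity),
          abs_of_nonneg (hg0 t)]
        exact h1
    have hInv : IntegrableOn (fun t => t ^ (-1 : ℝ)) (Set.Ioi T) := by
      have h2 : IntegrableOn (fun t => (2 / ℓ) * (ℓ / 2 * t⁻¹)) (Set.Ioi T) :=
        hIOn.const_mul (2 / ℓ)
      refine h2.congr_fun ?_ measurableSet_Ioi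
      intro t ht
      have htpos : 0 < t := hTpos.trans ht
      show 2 / ℓ * (ℓ / 2 * t⁻¹) = t ^ (-1 : ℝ)
      rw [Real.rpow_neg_one]
      field_simp
    rw [integrableOn_Ioi_rpow_iff hTpos] at hInv
    linarith
  rw [← hℓ0]
  exact htend


lemma oneD_integral_le (g g' : ℝ → ℝ) (hd : ∀ t, HasDerivAt g (g' t) t)
    (hg0 : ∀ t, 0 ≤ g t) (hgi : Integrable g)
    (hti : Integrable (fun t => t * g' t)) :
    ∫ t, g t ≤ ∫ t, |t * g' t| := by
  have hhi : Integrable (fun t => g t + t * g' t) := hgi.add hti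
  -- limit at +∞
  have htop : Tendsto (fun t => t * g t) atTop (nhds 0) :=
    oneD_tendsto g g' hd hg0 hgi hhi
  -- limit at -∞ via reflection
  have hbot : Tendsto (fun t => t * g t) atBot (nhds 0) := by
    set G : ℝ → ℝ := fun t => g (-t) with hG
    set G' : ℝ → ℝ := fun t => -g' (-t) with hG'
    have hdG : ∀ t, HasDerivAt G (G' t) t := by
      intro t
      have := (hd (-t)).comp t (hasDerivAt_neg t)
      exact this.congr_deriv (by simp [hG'])
    have hneg : MeasurePreserving (fun t : ℝ => -t) volume volume :=
      Measure.measurePreserving_neg _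
    have hemb : MeasurableEmbedding (fun t : ℝ => -t) :=
      (Homeomorph.neg ℝ).measurableEmbedding
    have hgiG : Integrable G := by
      exact (hneg.integrable_comp_emb hemb).mpr hgi
    have hhiG : Integrable (fun t => G t + t * G' t) := by
      have h1 : Integrable (fun t => (fun s => g s + s * g' s) (-t)) :=
        (hneg.integrable_comp_emb hemb).mpr hhi
      refine h1.congr (Eventually.of_forall fun t => ?_)
      simp only [hG, hG']
      ring
    have htopG := oneD_tendsto G G' hdG (fun t => hg0 (-t)) hgiG hhiG
    have comp := htopG.comp tendsto_neg_atBot_atTop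
    have : Tendsto (fun t : ℝ => -((-t) * G (-t))) atBot (nhds 0) := by
      simpa using comp.neg
    refine this.congr fun t => ?_
    simp only [hG, neg_neg]
    ring
  -- whole-line integral of h' is zero
  have hh : ∀ t, HasDerivAt (fun t => t * g t) (g t + t * g' t) t := by
    intro t
    exact ((hasDerivAt_id' t).mul (hd t)).congr_deriv (by ring)
  have hzero : ∫ t, (g t + t * g' t) = 0 := by
    have h1 : Tendsto (fun t : ℝ => ∫ s in (-t)..t, (g s + s * g' s)) atTop
        (nhds (∫ t, (g t + t * g' t))) :=
      intervalIntegral_tendsto_integral hhi tendsto_neg_atTop_atBot tendsto_id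
    have h2 : Tendsto (fun t : ℝ => ∫ s in (-t)..t, (g s + s * g' s)) atTop (nhds 0) := by
      have hftc : ∀ t : ℝ, ∫ s in (-t)..t, (g s + s * g' s) = t * g t - (-t) * g (-t) := by
        intro t
        exact integral_eq_sub_of_hasDerivAt (fun s _ => hh s) (hhi.intervalIntegrable)
      have h3 : Tendsto (fun t : ℝ => (-t) * g (-t)) atTop (nhds 0) :=
        hbot.comp tendsto_neg_atTop_atBot
      have := htop.sub h3
      rw [sub_zero] at this
      exact this.congr fun t => (hftc t).symm
    exact tendsto_nhds_unique h1 h2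
  have hsplit : ∫ t, (g t + t * g' t) = (∫ t, g t) + ∫ t, t * g' t :=
    integral_add hgi hti
  have : ∫ t, g t = -∫ t, t * g' t := by linarith [hzero, hsplit.symm ▸ hzero]
  rw [this]
  calc -∫ t, t * g' t ≤ |∫ t, t * g' t| := neg_le_abs _
    _ ≤ ∫ t, |t * g' t| := by
        have := norm_integral_le_integral_norm (μ := volume) (fun t : ℝ => t * g' t)
        simpa only [Real.norm_eq_abs] using this

noncomputable def me : (ℝ × ℝ) ≃ᵐ EuclideanSpace ℝ (Fin 2) :=
  (MeasurableEquiv.piFinTwo (fun _ => ℝ)).symm.trans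
    (MeasurableEquiv.toLp 2 (Fin 2 → ℝ)).symm.symm

lemma me_mp : MeasurePreserving me :=
  ((EuclideanSpace.volume_preserving_symm_measurableEquiv_toLp (Fin 2)).symm).comp
    ((volume_preserving_piFinTwo (fun _ => ℝ)).symm _)

lemma me_lin (t y : ℝ) : me (t, y) = me (0, y) + t • me (1, 0) := by
  ext i
  have h : (me (0, y) + t • me (1, 0)) i = me (0, y) i + t * me (1, 0) i := rfl
  rw [h]
  fin_cases i
  · show t = 0 + t * 1; ring
  · show y = y + t * 0; ring

lemma me_norm_sq (z : ℝ × ℝ) : ‖me z‖ ^ 2 = z.1 ^ 2 + z.2 ^ 2 := by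
  rw [EuclideanSpace.norm_eq, Real.sq_sqrt (by positivity), Fin.sum_univ_two]
  show ‖z.1‖ ^ 2 + ‖z.2‖ ^ 2 = _
  rw [Real.norm_eq_abs, Real.norm_eq_abs, sq_abs, sq_abs]

lemma me_v_norm : ‖me (1, 0)‖ = 1 := by
  rw [EuclideanSpace.norm_eq, Fin.sum_univ_two]
  show Real.sqrt (‖(1:ℝ)‖ ^ 2 + ‖(0:ℝ)‖ ^ 2) = 1
  norm_num


lemma uncertainty (u : EuclideanSpace ℝ (Fin 2) → ℂ)
    (hu : Differentiable ℝ u)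
    (hU2 : Integrable (fun x => ‖u x‖ ^ 2))
    (hT : Integrable (fun x : EuclideanSpace ℝ (Fin 2) => ‖fderiv ℝ u x‖ ^ 2))
    (hL : Integrable (fun x : EuclideanSpace ℝ (Fin 2) => ‖x‖ ^ 2 * ‖u x‖ ^ 2)) :
    ∫ x, ‖u x‖ ^ 2 ≤
      2 * (Real.sqrt (∫ x, ‖x‖ ^ 2 * ‖u x‖ ^ 2) *
        Real.sqrt (∫ x : EuclideanSpace ℝ (Fin 2), ‖fderiv ℝ u x‖ ^ 2)) := by
  have hemb : MeasurableEmbedding me := me.measurableEmbedding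
  set v : EuclideanSpace ℝ (Fin 2) := me (1, 0) with hv_def
  have hv : ‖v‖ = 1 := me_v_norm
  set F : ℝ × ℝ → ℝ := fun z => ‖u (me z)‖ ^ 2 with hF_def
  set G : ℝ × ℝ → ℝ := fun z => |z.1| * ‖u (me z)‖ with hG_def
  set H : ℝ × ℝ → ℝ := fun z => ‖fderiv ℝ u (me z)‖ with hH_def
  set Φ : ℝ × ℝ → ℝ := fun z => 2 * (G z * H z) with hΦ_def
  -- basic facts
  have habs : ∀ z : ℝ × ℝ, |z.1| ≤ ‖me z‖ := by
    intro z
    have h1 := me_norm_sq z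
    nlinarith [norm_nonneg (me z), abs_nonneg z.1, sq_abs z.1, sq_nonneg z.2]
  -- measurability
  have m1 : Measurable fun z : ℝ × ℝ => u (me z) :=
    (hu.continuous.measurable).comp me.measurable
  have m2 : Measurable fun z : ℝ × ℝ => fderiv ℝ u (me z) :=
    (measurable_fderiv ℝ u).comp me.measurable
  have mG : Measurable G := (measurable_fst.abs.mul m1.norm)
  have mH : Measurable H := m2.norm
  have mF : Measurable F := m1.norm.pow measurable_const
  -- integrability by composition
  have hFi : Integrable F := (me_mp.integrable_comp_emb hemb).mpr hU2
  have hL' : Integrable (fun z : ℝ × ℝ => ‖me z‖ ^ 2 * ‖u (me z)‖ ^ 2) :=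
    (me_mp.integrable_comp_emb hemb).mpr hL
  have hT' : Integrable (fun z : ℝ × ℝ => ‖fderiv ℝ u (me z)‖ ^ 2) :=
    (me_mp.integrable_comp_emb hemb).mpr hT
  have hG2 : Integrable (fun z : ℝ × ℝ => G z ^ 2) := by
    refine hL'.mono' (mG.pow measurable_const).aestronglyMeasurable ?_
    refine Eventually.of_forall fun z => ?_
    rw [Real.norm_eq_abs, abs_of_nonneg (by positivity)]
    have := habs z
    have h2 : G z ^ 2 = z.1 ^ 2 * ‖u (me z)‖ ^ 2 := by
      simp only [hG_def]; rw [mul_pow, sq_abs]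
    rw [h2]
    have : z.1 ^ 2 ≤ ‖me z‖ ^ 2 := by nlinarith [sq_abs z.1, habs z, abs_nonneg z.1, norm_nonneg (me z)]
    nlinarith [sq_nonneg (‖u (me z)‖)]
  have hH2 : Integrable (fun z : ℝ × ℝ => H z ^ 2) := hT'
  have hΦi : Integrable Φ := by
    refine (hG2.add hH2).mono' (((mG.mul mH).const_mul 2).aestronglyMeasurable) ?_
    refine Eventually.of_forall fun z => ?_
    rw [Real.norm_eq_abs, abs_of_nonneg (by positivity)]
    show 2 * (G z * H z) ≤ G z ^ 2 + H z ^ 2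
    nlinarith [sq_nonneg (G z - H z)]
  -- slice inequality
  rw [Measure.volume_eq_prod] at hFi hΦi
  -- slices
  have hslice : ∀ᵐ y : ℝ, (∫ t, F (t, y)) ≤ ∫ t, Φ (t, y) := by
    filter_upwards [hFi.prod_left_ae, hΦi.prod_left_ae] with y hFy hΦy
    set γ : ℝ → EuclideanSpace ℝ (Fin 2) := fun t => me (t, y) with hγ_def
    have hγd : ∀ t, HasDerivAt γ v t := by
      intro t
      have h1 : HasDerivAt (fun t : ℝ => me (0, y) + t • v) v t := by
        have := ((hasDerivAt_id t).smul_const v).const_add (me (0, y))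
        simpa using this
      refine h1.congr_of_eventuallyEq (Eventually.of_forall fun s => ?_)
      exact me_lin s y
    set w : ℝ → ℂ := fun t => u (γ t) with hw_def
    have hwd : ∀ t, HasDerivAt w (fderiv ℝ u (γ t) v) t := fun t =>
      ((hu (γ t)).hasFDerivAt).comp_hasDerivAt t (hγd t)
    set g : ℝ → ℝ := fun t => F (t, y) with hg_def
    set g' : ℝ → ℝ := fun t =>
      2 * (inner ℝ (w t) (fderiv ℝ u (γ t) v) : ℝ) with hg'_def
    have hd : ∀ t, HasDerivAt g (g' t) t := by
      intro t
      have h1 := HasDerivAt.inner ℝ (hwd t) (hwd t)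
      have h2 : (fun s => (inner ℝ (w s) (w s) : ℝ)) = g := by
        funext s
        show (inner ℝ (w s) (w s) : ℝ) = ‖u (me (s, y))‖ ^ 2
        rw [real_inner_self_eq_norm_sq]
      rw [h2] at h1
      convert h1 using 1
      case e'_4 => rfl
      case e'_5 => rfl
      rw [hg'_def]
      simp only []
      rw [real_inner_comm (w t)]
      ring
    have hg0 : ∀ t, 0 ≤ g t := fun t => by positivity
    have hbd : ∀ t, |t * g' t| ≤ Φ (t, y) := by
      intro t
      have h1 : |(inner ℝ (w t) (fderiv ℝ u (γ t) v) : ℝ)| ≤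
          ‖w t‖ * ‖fderiv ℝ u (γ t) v‖ := abs_real_inner_le_norm _ _
      have h2 : ‖fderiv ℝ u (γ t) v‖ ≤ ‖fderiv ℝ u (γ t)‖ := by
        have := (fderiv ℝ u (γ t)).le_opNorm v
        rwa [hv, mul_one] at this
      have h3 : Φ (t, y) = 2 * ((|t| * ‖w t‖) * ‖fderiv ℝ u (γ t)‖) := rfl
      rw [h3, abs_mul]
      have h4 : |g' t| ≤ 2 * (‖w t‖ * ‖fderiv ℝ u (γ t)‖) := by
        rw [hg'_def]
        simp only []
        rw [abs_mul, abs_two]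
        have := mul_le_mul_of_nonneg_left (h1.trans
          (mul_le_mul_of_nonneg_left h2 (norm_nonneg _))) (by norm_num : (0:ℝ) ≤ 2)
        linarith
      calc |t| * |g' t| ≤ |t| * (2 * (‖w t‖ * ‖fderiv ℝ u (γ t)‖)) :=
            mul_le_mul_of_nonneg_left h4 (abs_nonneg t)
        _ = 2 * (|t| * ‖w t‖ * ‖fderiv ℝ u (γ t)‖) := by ring
    have hti : Integrable (fun t => t * g' t) := by
      refine hΦy.mono' ?_ (Eventually.of_forall fun t => ?_)
      · have mw : Measurable w := hu.continuous.measurable.comp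
          (me.measurable.comp (measurable_id.prodMk measurable_const))
        have mD : Measurable fun t => fderiv ℝ u (γ t) :=
          (measurable_fderiv ℝ u).comp
            (me.measurable.comp (measurable_id.prodMk measurable_const))
        have mDv : Measurable fun t => fderiv ℝ u (γ t) v := by
          exact (ContinuousLinearMap.apply ℝ ℂ v).continuous.measurable.comp mD
        have : Measurable g' := (mw.inner (𝕜 := ℝ) mDv).const_mul 2
        exact (measurable_id.mul this).aestronglyMeasurable
      · rw [Real.norm_eq_abs]
        exact hbd t
    have key := oneD_integral_le g g' hd hg0 hFy hti
    calc (∫ t, F (t, y)) = ∫ t, g t := rfl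
      _ ≤ ∫ t, |t * g' t| := key
      _ ≤ ∫ t, Φ (t, y) := by
          refine integral_mono hti.abs hΦy fun t => ?_
          exact hbd t
  -- put slices together via Fubini
  have hmain : (∫ z : ℝ × ℝ, F z ∂((volume : Measure ℝ).prod volume)) ≤
      ∫ z : ℝ × ℝ, Φ z ∂((volume : Measure ℝ).prod volume) := by
    rw [integral_prod_symm _ hFi, integral_prod_symm _ hΦi]
    exact integral_mono_ae hFi.integral_prod_right hΦi.integral_prod_right hslice
  -- transport integrals back
  have hcomp : ∀ (φ : EuclideanSpace ℝ (Fin 2) → ℝ),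
      ∫ z : ℝ × ℝ, φ (me z) = ∫ x, φ x := fun φ =>
    me_mp.integral_comp hemb φ
  have hFeq : (∫ z : ℝ × ℝ, F z ∂((volume : Measure ℝ).prod volume)) =
      ∫ x, ‖u x‖ ^ 2 := by
    rw [← Measure.volume_eq_prod]
    exact hcomp (fun x => ‖u x‖ ^ 2)
  -- Cauchy–Schwarz
  have hpq : Real.HolderConjugate 2 2 := Real.HolderConjugate.two_two
  have hmemG : MemLp G (ENNReal.ofReal 2) volume := by
    have := (memLp_two_iff_integrable_sq mG.aestronglyMeasurable).mpr hG2
    rw [ENNReal.ofReal_ofNat]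
    exact this
  have hmemH : MemLp H (ENNReal.ofReal 2) volume := by
    have := (memLp_two_iff_integrable_sq mH.aestronglyMeasurable).mpr hH2
    rw [ENNReal.ofReal_ofNat]
    exact this
  have hCS : ∫ z : ℝ × ℝ, G z * H z ≤
      (∫ z : ℝ × ℝ, G z ^ (2:ℝ)) ^ ((1:ℝ)/2) * (∫ z : ℝ × ℝ, H z ^ (2:ℝ)) ^ ((1:ℝ)/2) :=
    integral_mul_le_Lp_mul_Lq_of_nonneg hpq
      (Eventually.of_forall fun z => by positivity)
      (Eventually.of_forall fun z => by positivity) hmemG hmemH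
  have hrG : (fun z : ℝ × ℝ => G z ^ (2:ℝ)) = fun z => G z ^ 2 := by
    funext z
    rw [Real.rpow_two]
  have hrH : (fun z : ℝ × ℝ => H z ^ (2:ℝ)) = fun z => H z ^ 2 := by
    funext z
    rw [Real.rpow_two]
  have hGL : ∫ z : ℝ × ℝ, G z ^ (2:ℝ) ≤ ∫ x, ‖x‖ ^ 2 * ‖u x‖ ^ 2 := by
    rw [hrG, ← hcomp (fun x => ‖x‖ ^ 2 * ‖u x‖ ^ 2)]
    refine integral_mono hG2 hL' fun z => ?_
    have h2 : G z ^ 2 = z.1 ^ 2 * ‖u (me z)‖ ^ 2 := by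
      show (|z.1| * ‖u (me z)‖) ^ 2 = _
      rw [mul_pow, sq_abs]
    rw [h2]
    have h3 : z.1 ^ 2 ≤ ‖me z‖ ^ 2 := by
      nlinarith [sq_abs z.1, habs z, abs_nonneg z.1, norm_nonneg (me z)]
    nlinarith [sq_nonneg (‖u (me z)‖)]
  have hHT : ∫ z : ℝ × ℝ, H z ^ (2:ℝ) =
      ∫ x : EuclideanSpace ℝ (Fin 2), ‖fderiv ℝ u x‖ ^ 2 := by
    rw [hrH, ← hcomp (fun x => ‖fderiv ℝ u x‖ ^ 2)]
  have hΦeq : (∫ z : ℝ × ℝ, Φ z ∂((volume : Measure ℝ).prod volume)) =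
      2 * ∫ z : ℝ × ℝ, G z * H z := by
    rw [← Measure.volume_eq_prod]
    exact integral_const_mul 2 _
  -- assemble
  have hLnn : (0:ℝ) ≤ ∫ x, ‖x‖ ^ 2 * ‖u x‖ ^ 2 :=
    integral_nonneg fun x => by positivity
  have hTnn : (0:ℝ) ≤ ∫ x : EuclideanSpace ℝ (Fin 2), ‖fderiv ℝ u x‖ ^ 2 :=
    integral_nonneg fun x => by positivity
  have hG2nn : (0:ℝ) ≤ ∫ z : ℝ × ℝ, G z ^ (2:ℝ) := by
    rw [hrG]; exact integral_nonneg fun z => by positivity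
  have step1 : (∫ z : ℝ × ℝ, G z ^ (2:ℝ)) ^ ((1:ℝ)/2) ≤
      Real.sqrt (∫ x, ‖x‖ ^ 2 * ‖u x‖ ^ 2) := by
    rw [Real.sqrt_eq_rpow]
    exact Real.rpow_le_rpow hG2nn hGL (by norm_num)
  have step2 : (∫ z : ℝ × ℝ, H z ^ (2:ℝ)) ^ ((1:ℝ)/2) =
      Real.sqrt (∫ x : EuclideanSpace ℝ (Fin 2), ‖fderiv ℝ u x‖ ^ 2) := by
    rw [Real.sqrt_eq_rpow, hHT]
  calc ∫ x, ‖u x‖ ^ 2 = ∫ z : ℝ × ℝ, F z ∂((volume : Measure ℝ).prod volume) := hFeq.symm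
    _ ≤ ∫ z : ℝ × ℝ, Φ z ∂((volume : Measure ℝ).prod volume) := hmain
    _ = 2 * ∫ z : ℝ × ℝ, G z * H z := hΦeq
    _ ≤ 2 * ((∫ z : ℝ × ℝ, G z ^ (2:ℝ)) ^ ((1:ℝ)/2) *
          (∫ z : ℝ × ℝ, H z ^ (2:ℝ)) ^ ((1:ℝ)/2)) := by linarith [hCS]
    _ ≤ 2 * (Real.sqrt (∫ x, ‖x‖ ^ 2 * ‖u x‖ ^ 2) *
          Real.sqrt (∫ x : EuclideanSpace ℝ (Fin 2), ‖fderiv ℝ u x‖ ^ 2)) := by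
        rw [step2]
        refine mul_le_mul_of_nonneg_left (mul_le_mul_of_nonneg_right step1 ?_) (by norm_num)
        exact Real.sqrt_nonneg _
lemma exists_witness (p q : ℝ) (hp : 2 < p) (hpq : p < q) :
    ∃ u : EuclideanSpace ℝ (Fin 2) → ℂ, InSigma p q u ∧ u ≠ 0 := by
  set f : ContDiffBump (0 : EuclideanSpace ℝ (Fin 2)) := ⟨1, 2, one_pos, one_lt_two⟩ with hf
  set u : EuclideanSpace ℝ (Fin 2) → ℂ := fun x => (f x : ℂ) with hu_def
  have hcont : Continuous u := Complex.continuous_ofReal.comp f.continuous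
  have husmooth : ContDiff ℝ 1 u :=
    Complex.ofRealCLM.contDiff.comp (f.contDiff (n := 1))
  have hdiff : Differentiable ℝ u := husmooth.differentiable one_ne_zero
  have hsupp : HasCompactSupport u :=
    f.hasCompactSupport.comp_left (g := fun t : ℝ => (t : ℂ)) Complex.ofReal_zero
  have hrpow : ∀ r : ℝ, 0 < r → Integrable
      (fun x : EuclideanSpace ℝ (Fin 2) => ‖u x‖ ^ r) := by
    intro r hr0
    have hc : Continuous fun x : EuclideanSpace ℝ (Fin 2) => ‖u x‖ ^ r :=
      hcont.norm.rpow_const fun x => Or.inr (le_of_lt hr0)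
    refine hc.integrable_of_hasCompactSupport ?_
    refine hsupp.comp_left (g := fun w : ℂ => ‖w‖ ^ r) ?_
    simp [Real.zero_rpow (ne_of_gt hr0)]
  refine ⟨u, ⟨hdiff, hcont.memLp_of_hasCompactSupport hsupp, ?_, ?_,
      hrpow p (by linarith), hrpow q (by linarith)⟩, ?_⟩
  · have hc : Continuous fun x : EuclideanSpace ℝ (Fin 2) => ‖fderiv ℝ u x‖ ^ 2 :=
      ((husmooth.continuous_fderiv one_ne_zero).norm).pow 2
    refine hc.integrable_of_hasCompactSupport ?_
    refine (hsupp.fderiv ℝ).comp_left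
      (g := fun L : EuclideanSpace ℝ (Fin 2) →L[ℝ] ℂ => ‖L‖ ^ 2) ?_
    simp
  · have hc : Continuous fun x : EuclideanSpace ℝ (Fin 2) => ‖x‖ ^ 2 * ‖u x‖ ^ 2 :=
      (continuous_norm.pow 2).mul (hcont.norm.pow 2)
    refine hc.integrable_of_hasCompactSupport ?_
    have h1 : HasCompactSupport fun x : EuclideanSpace ℝ (Fin 2) => ‖u x‖ ^ 2 :=
      hsupp.comp_left (g := fun w : ℂ => ‖w‖ ^ 2) (by simp)
    exact h1.mul_left
  · intro h0
    have h1 : u 0 = 0 := congrFun h0 0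
    have h2 : f 0 = 1 := f.one_of_mem_closedBall (by
      exact Metric.mem_closedBall_self (by norm_num : (0:ℝ) ≤ 1))
    rw [hu_def] at h1
    simp only [h2] at h1
    exact one_ne_zero (α := ℂ) (by exact_mod_cast h1)

lemma lower_bound (p q S : ℝ) (hp : 2 < p) (hpq : p < q) (hS : S ≤ 0)
    (u : EuclideanSpace ℝ (Fin 2) → ℂ) (hσ : InSigma p q u) (hne : u ≠ 0) :
    p / q ≤ muS p q S u := by
  obtain ⟨hdiff, hmem, hT, hL, hA, hB⟩ := hσ
  have hU2 : Integrable (fun x : EuclideanSpace ℝ (Fin 2) => ‖u x‖ ^ 2) :=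
    (hmem.norm).integrable_sq
  have hTnn : 0 ≤ Tfun u := integral_nonneg fun x => by positivity
  have hLnn : 0 ≤ Lfun u := integral_nonneg fun x => by positivity
  have hBnn : 0 ≤ Bfun q u := integral_nonneg fun x => by positivity
  have hApos : 0 < Afun p u := by
    rw [Afun, integral_pos_iff_support_of_nonneg (fun x => by positivity) hA]
    obtain ⟨x₀, hx₀⟩ := Function.ne_iff.mp hne
    have hopen : IsOpen {x : EuclideanSpace ℝ (Fin 2) | u x ≠ 0} :=
      isOpen_compl_singleton.preimage hdiff.continuous
    have hsub : {x : EuclideanSpace ℝ (Fin 2) | u x ≠ 0} ⊆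
        Function.support fun x => ‖u x‖ ^ p := by
      intro x hx
      have : (0:ℝ) < ‖u x‖ ^ p := Real.rpow_pos_of_pos (norm_pos_iff.mpr hx) p
      exact ne_of_gt this
    exact lt_of_lt_of_le (hopen.measure_pos volume ⟨x₀, hx₀⟩) (measure_mono hsub)
  have hAle : Afun p u ≤ (∫ x, ‖u x‖ ^ 2) + Bfun q u := by
    rw [Afun, Bfun, ← integral_add hU2 hB]
    refine integral_mono hA (hU2.add hB) fun x => ?_
    set t : ℝ := ‖u x‖ with ht_def
    have htnn : 0 ≤ t := norm_nonneg _
    rcases eq_or_lt_of_le htnn with h0 | h0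
    · rw [← h0]
      rw [Real.zero_rpow (by linarith : p ≠ 0), Real.zero_rpow (by linarith : q ≠ 0)]
      norm_num
    · rcases le_or_gt t 1 with h1 | h1
      · have := Real.rpow_le_rpow_of_exponent_ge h0 h1 (le_of_lt hp)
        have h2 : t ^ (2:ℝ) = t ^ (2:ℕ) := Real.rpow_two t
        have h3 : (0:ℝ) ≤ t ^ q := Real.rpow_nonneg htnn q
        rw [h2] at this
        linarith
      · have := Real.rpow_le_rpow_of_exponent_le (le_of_lt h1) (le_of_lt hpq)
        have h3 : (0:ℝ) ≤ t ^ (2:ℕ) := by positivity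
        linarith
  have huncert : (∫ x, ‖u x‖ ^ 2) ≤ 2 * (Real.sqrt (Lfun u) * Real.sqrt (Tfun u)) :=
    uncertainty u hdiff hU2 hT hL
  set X : ℝ := Real.sqrt (Tfun u - 2 * S) * Real.sqrt (Lfun u) with hX_def
  have hXnn : 0 ≤ X := mul_nonneg (Real.sqrt_nonneg _) (Real.sqrt_nonneg _)
  have hsqT : Real.sqrt (Tfun u) ≤ Real.sqrt (Tfun u - 2 * S) :=
    Real.sqrt_le_sqrt (by linarith)
  have hA2 : Afun p u ≤ 2 * X + Bfun q u := by
    have h1 : 2 * (Real.sqrt (Lfun u) * Real.sqrt (Tfun u)) ≤ 2 * X := by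
      rw [hX_def]
      have := mul_le_mul_of_nonneg_left hsqT (Real.sqrt_nonneg (Lfun u))
      nlinarith [Real.sqrt_nonneg (Lfun u)]
    linarith
  have hp0 : p ≠ 0 := by linarith
  have hq0 : q ≠ 0 := by linarith
  rw [muS]
  rw [le_div_iff₀ (by positivity)]
  have heq : p / q * (1 / p * Afun p u) = Afun p u / q := by
    field_simp
  rw [heq, div_le_iff₀ (by linarith : (0:ℝ) < q)]
  have h2 : (Real.sqrt (Tfun u - 2 * S) * Real.sqrt (Lfun u) + 1 / q * Bfun q u) * q
      = q * X + Bfun q u := by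
    rw [hX_def]
    field_simp
  rw [h2]
  nlinarith [hXnn, hBnn]

end Aux

/-- for `N = 2`, `2 < p < q < ∞`, and `S ≤ 0`, the extreme value
`μ̂^S = inf { μ^S(u) : u ∈ Σ \ {0} }` is strictly positive. -/
theorem stmt8 (p q S : ℝ) (hp : 2 < p) (hpq : p < q) (hS : S ≤ 0) :
    0 < sInf { m : ℝ | ∃ u : EuclideanSpace ℝ (Fin 2) → ℂ,
      InSigma p q u ∧ u ≠ 0 ∧ m = muS p q S u } := by
  have hq0 : (0:ℝ) < q := by linarith
  have hp0 : (0:ℝ) < p := by linarith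
  refine lt_of_lt_of_le (show (0:ℝ) < p / q by positivity) (le_csInf ?_ ?_)
  · obtain ⟨u, hσ, hne⟩ := exists_witness p q hp hpq
    exact ⟨muS p q S u, u, hσ, hne, rfl⟩
  · rintro m ⟨u, hσ, hne, rfl⟩
    exact lower_bound p q S hp hpq hS u hσ hne
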